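/- (Absolute stability of the explicit scheme for the integral equation.) Let γ ∈ (0,1), k > 0, let f be nonnegative, non-decreasing and locally Lipschitz on [0,∞), let u₀ > 0, and let u be the unique solution of D_c^γ u = f(u), u(0) = u₀, on its maximal interval [0, T_b). Define the sequence (uⁿ) by u⁰ = u₀ and uⁿ = u₀ + (k^γ/Γ(1+γ)) ∑_{m=0}^{n−1} f(uᵐ) ((n−m)^γ − (n−m−1)^γ) (or alternatively uⁿ = u₀ + (k^γ/Γ(γ)) ∑_{m=0}^{n−1} f(uᵐ) (n−m)^{γ−1}). Then u^{n−1} ≤ uⁿ ≤ u(nk) for all n with 1 ≤ n < T_b/k. -/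

import Mathlib

open MeasureTheory Real Filter Set Asymptotics
open scoped ENNReal Topology
open intervalIntegral

/-- `u` is a solution of the Volterra integral form of the fractional ODE
`D_c^γ u = f(u)`, `u(0) = u₀`, on the interval `[0, T)` (with `T ∈ (0,∞]`),
taking values in the set `D`. -/
noncomputable def IsSolUpTo (γ : ℝ) (f : ℝ → ℝ) (D : Set ℝ) (u₀ : ℝ) (u : ℝ → ℝ)
    (T : ℝ≥0∞) : Prop :=
  u 0 = u₀ ∧
  ContinuousOn u {t : ℝ | 0 ≤ t ∧ ENNReal.ofReal t < T} ∧
  (∀ t : ℝ, 0 ≤ t → ENNReal.ofReal t < T → u t ∈ D) ∧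
  (∀ t : ℝ, 0 ≤ t → ENNReal.ofReal t < T →
    u t = u₀ + (1 / Real.Gamma γ) * ∫ s in (0:ℝ)..t, (t - s) ^ (γ - 1) * f (u s))

lemma kernel_intble {γ : ℝ} (hγ0 : 0 < γ) (t a b : ℝ) :
    IntervalIntegrable (fun s => (t - s) ^ (γ - 1)) volume a b := by
  have h := (intervalIntegrable_rpow' (a := t - a) (b := t - b)
    (r := γ - 1) (by linarith)).comp_sub_left t
  simpa using h

lemma kernel_integral {γ : ℝ} (hγ0 : 0 < γ) {p q t : ℝ} :
    ∫ s in p..q, (t - s) ^ (γ - 1) = ((t - p) ^ γ - (t - q) ^ γ) / γ := by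
  rw [intervalIntegral.integral_comp_sub_left (fun x => x ^ (γ - 1)) t,
    integral_rpow (Or.inl (by linarith))]
  ring_nf

lemma lip_cont {f : ℝ → ℝ}
    (hflip : ∀ x ∈ Set.Ici (0:ℝ), ∃ K : NNReal, ∃ s ∈ 𝓝[Set.Ici (0:ℝ)] x, LipschitzOnWith K f s) :
    ContinuousOn f (Set.Ici 0) := by
  intro x hx
  obtain ⟨K, s, hs, hK⟩ := hflip x hx
  exact (hK.continuousOn x (mem_of_mem_nhdsWithin hx hs)).mono_of_mem_nhdsWithin hs

lemma sol_ge {γ u₀ : ℝ} {f u : ℝ → ℝ} {T : ℝ≥0∞} (hγ0 : 0 < γ)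
    (hfpos : ∀ x ∈ Set.Ici (0:ℝ), 0 ≤ f x)
    (hu : IsSolUpTo γ f (Set.Ici 0) u₀ u T) {t : ℝ} (ht0 : 0 ≤ t)
    (htT : ENNReal.ofReal t < T) : u₀ ≤ u t := by
  obtain ⟨h0, hc, hmem, heq⟩ := hu
  rw [heq t ht0 htT]
  have h1 : 0 ≤ ∫ s in (0:ℝ)..t, (t - s) ^ (γ - 1) * f (u s) := by
    apply intervalIntegral.integral_nonneg ht0
    intro s hs
    have hsT : ENNReal.ofReal s < T := lt_of_le_of_lt (ENNReal.ofReal_le_ofReal hs.2) htT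
    exact mul_nonneg (Real.rpow_nonneg (by linarith [hs.2]) _)
      (hfpos _ (hmem s hs.1 hsT))
  have h2 : 0 < Real.Gamma γ := Real.Gamma_pos_of_pos hγ0
  have := mul_nonneg (le_of_lt (by positivity : (0:ℝ) < 1 / Real.Gamma γ)) h1
  linarith

lemma sol_mono {γ u₀ : ℝ} {f u : ℝ → ℝ} {T : ℝ≥0∞} (hγ0 : 0 < γ) (hγ1 : γ < 1)
    (hfpos : ∀ x ∈ Set.Ici (0:ℝ), 0 ≤ f x)
    (hfmono : MonotoneOn f (Set.Ici 0))
    (hflip : ∀ x ∈ Set.Ici (0:ℝ), ∃ K : NNReal, ∃ s ∈ 𝓝[Set.Ici (0:ℝ)] x, LipschitzOnWith K f s)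
    (hu₀ : 0 < u₀)
    (hu : IsSolUpTo γ f (Set.Ici 0) u₀ u T)
    {a b : ℝ} (ha : 0 ≤ a) (hab : a ≤ b) (hbT : ENNReal.ofReal b < T) :
    u a ≤ u b := by
  rcases eq_or_lt_of_le ha with ha0 | ha0
  · rw [← ha0, hu.1]
    exact sol_ge hγ0 hfpos hu (le_trans ha hab) hbT
  have hb0 : 0 < b := lt_of_lt_of_le ha0 hab
  obtain ⟨h0, hc, hmem, heq⟩ := hu
  set c : ℝ := 1 / Real.Gamma γ with hcdef
  have hGpos : 0 < Real.Gamma γ := Real.Gamma_pos_of_pos hγ0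
  have hcpos : 0 < c := by positivity
  set l : ℝ := a / b with hldef
  have hl0 : 0 < l := div_pos ha0 hb0
  have hl1 : l ≤ 1 := (div_le_one hb0).mpr hab
  have hlb : l * b = a := div_mul_cancel₀ a hb0.ne'
  -- membership of [0, b] in the domain
  have hD : ∀ t : ℝ, 0 ≤ t → t ≤ b → ENNReal.ofReal t < T := fun t _ htb =>
    lt_of_le_of_lt (ENNReal.ofReal_le_ofReal htb) hbT
  have hIsub : Icc (0:ℝ) b ⊆ {t : ℝ | 0 ≤ t ∧ ENNReal.ofReal t < T} := fun t ht =>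
    ⟨ht.1, hD t ht.1 ht.2⟩
  have hcu : ContinuousOn u (Icc 0 b) := hc.mono hIsub
  have hlmem : ∀ t ∈ Icc (0:ℝ) b, l * t ∈ Icc (0:ℝ) b := fun t ht =>
    ⟨mul_nonneg hl0.le ht.1, le_trans
      (mul_le_of_le_one_left ht.1 hl1) ht.2⟩
  have hcul : ContinuousOn (fun t => u (l * t)) (Icc 0 b) :=
    hcu.comp ((continuous_const.mul continuous_id).continuousOn) hlmem
  have hfc : ContinuousOn f (Set.Ici 0) := lip_cont hflip
  have humem : ∀ t ∈ Icc (0:ℝ) b, u t ∈ Set.Ici (0:ℝ) := fun t ht =>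
    hmem t ht.1 (hD t ht.1 ht.2)
  have hfu : ContinuousOn (fun s => f (u s)) (Icc 0 b) := hfc.comp hcu humem
  have hful : ContinuousOn (fun s => f (u (l * s))) (Icc 0 b) :=
    hfc.comp hcul (fun t ht => humem _ (hlmem t ht))
  set g : ℝ → ℝ := fun σ => f (u σ) - l ^ γ * f (u (l * σ)) with hgdef
  set φ : ℝ → ℝ := fun t => u t - u (l * t) with hφdef
  have hφc : ContinuousOn φ (Icc 0 b) := hcu.sub hcul
  have hgc : ContinuousOn g (Icc 0 b) := hfu.sub (hful.const_smul (l ^ γ))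
  -- the integral identity for φ
  have hid : ∀ t ∈ Icc (0:ℝ) b, φ t = c * ∫ σ in (0:ℝ)..t, (t - σ) ^ (γ - 1) * g σ := by
    intro t ht
    have ht0 := ht.1
    have htb := ht.2
    have hA := heq t ht0 (hD t ht0 htb)
    have hltmem := hlmem t ht
    have hB := heq (l * t) hltmem.1 (hD _ hltmem.1 hltmem.2)
    -- substitution in the second integral
    have hsub : (∫ s in (0:ℝ)..(l * t), (l * t - s) ^ (γ - 1) * f (u s))
        = l ^ γ * ∫ σ in (0:ℝ)..t, (t - σ) ^ (γ - 1) * f (u (l * σ)) := by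
      have h1 := intervalIntegral.smul_integral_comp_mul_left
        (fun s => (l * t - s) ^ (γ - 1) * f (u s)) (a := 0) (b := t) l
      rw [mul_zero] at h1
      have h2 : (∫ σ in (0:ℝ)..t, (l * t - l * σ) ^ (γ - 1) * f (u (l * σ)))
          = ∫ σ in (0:ℝ)..t, l ^ (γ - 1) * ((t - σ) ^ (γ - 1) * f (u (l * σ))) := by
        apply intervalIntegral.integral_congr
        intro σ hσ
        rw [uIcc_of_le ht0] at hσ
        show (l * t - l * σ) ^ (γ - 1) * f (u (l * σ))
            = l ^ (γ - 1) * ((t - σ) ^ (γ - 1) * f (u (l * σ)))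
        have heq2 : l * t - l * σ = l * (t - σ) := by ring
        rw [heq2, Real.mul_rpow hl0.le (by linarith [hσ.2]), mul_assoc]
      rw [h2, intervalIntegral.integral_const_mul] at h1
      rw [← h1, smul_eq_mul]
      rw [← mul_assoc, ← Real.rpow_one_add' hl0.le (by intro h; linarith)]
      ring_nf
      congr 1
      apply intervalIntegral.integral_congr
      intro x _
      simp only [mul_comm x l]
    -- integrability
    have hI1 : IntervalIntegrable (fun σ => (t - σ) ^ (γ - 1) * f (u σ)) volume 0 t :=
      (kernel_intble hγ0 t 0 t).mul_continuousOn
        (hfu.mono (by rw [uIcc_of_le ht0]; exact Icc_subset_Icc le_rfl htb))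
    have hI2 : IntervalIntegrable (fun σ => (t - σ) ^ (γ - 1) * f (u (l * σ))) volume 0 t :=
      (kernel_intble hγ0 t 0 t).mul_continuousOn
        (hful.mono (by rw [uIcc_of_le ht0]; exact Icc_subset_Icc le_rfl htb))
    have hsplit : (∫ σ in (0:ℝ)..t, (t - σ) ^ (γ - 1) * g σ)
        = (∫ σ in (0:ℝ)..t, (t - σ) ^ (γ - 1) * f (u σ))
          - l ^ γ * ∫ σ in (0:ℝ)..t, (t - σ) ^ (γ - 1) * f (u (l * σ)) := by
      rw [← intervalIntegral.integral_const_mul,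
        ← intervalIntegral.integral_sub hI1 (hI2.const_mul _)]
      apply intervalIntegral.integral_congr
      intro σ _
      simp only [hgdef]
      ring
    simp only [hφdef]
    rw [hA, hB, hsub, hsplit]
    ring
  -- the claim : φ ≥ 0 on [0,b]
  have claim : ∀ t ∈ Icc (0:ℝ) b, 0 ≤ φ t := by
    by_contra hcon
    push_neg at hcon
    set E : Set ℝ := {t | t ∈ Icc (0:ℝ) b ∧ φ t < 0} with hEdef
    have hEne : E.Nonempty := by
      obtain ⟨t, ht, hφt⟩ := hcon
      exact ⟨t, ht, hφt⟩
    have hEsub : E ⊆ Icc 0 b := fun t ht => ht.1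
    have hbdd : BddBelow E := ⟨0, fun t ht => ht.1.1⟩
    set ts : ℝ := sInf E with htsdef
    have htscl : ts ∈ closure E := csInf_mem_closure hEne hbdd
    have hts : ts ∈ Icc (0:ℝ) b := closure_minimal hEsub isClosed_Icc htscl
    have hts0 : 0 ≤ ts := hts.1
    have htsb : ts ≤ b := hts.2
    -- φ ts ≤ 0
    have hle : φ ts ≤ 0 := by
      have hne : (𝓝[E] ts).NeBot := mem_closure_iff_nhdsWithin_neBot.mp htscl
      have htend : Tendsto φ (𝓝[E] ts) (𝓝 (φ ts)) := (hφc ts hts).mono hEsub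
      exact le_of_tendsto htend (Filter.eventually_of_mem self_mem_nhdsWithin
        (fun e he => he.2.le))
    -- φ ≥ 0 strictly before ts
    have hpos : ∀ σ, 0 ≤ σ → σ ≤ b → σ < ts → 0 ≤ φ σ := by
      intro σ h1 h2 h3
      by_contra h4
      exact absurd (csInf_le hbdd ⟨⟨h1, h2⟩, not_le.mp h4⟩) (not_le.mpr h3)
    -- g ≥ 0 before ts
    have hlγ1 : l ^ γ ≤ 1 := Real.rpow_le_one hl0.le hl1 hγ0.le
    have hgpos_lt : ∀ σ, 0 ≤ σ → σ ≤ b → 0 ≤ φ σ → 0 ≤ g σ := by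
      intro σ h1 h2 hφσ
      have hum := humem σ ⟨h1, h2⟩
      have hulm := humem _ (hlmem σ ⟨h1, h2⟩)
      have hmo : f (u (l * σ)) ≤ f (u σ) := hfmono hulm hum (by
        simp only [hφdef] at hφσ; linarith)
      have hfl : 0 ≤ f (u (l * σ)) := hfpos _ hulm
      simp only [hgdef]
      nlinarith
    -- φ ts ≥ 0 via the identity
    have hge : 0 ≤ φ ts := by
      rw [hid ts hts]
      apply mul_nonneg hcpos.le
      apply intervalIntegral.integral_nonneg hts0
      intro σ hσ
      rcases eq_or_lt_of_le hσ.2 with hσts | hσts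
      · rw [hσts, sub_self, Real.zero_rpow (by linarith), zero_mul]
      · exact mul_nonneg (Real.rpow_nonneg (by linarith) _)
          (hgpos_lt σ hσ.1 (le_trans hσ.2 htsb)
            (hpos σ hσ.1 (le_trans hσ.2 htsb) hσts))
    have hφts : φ ts = 0 := le_antisymm hle hge
    -- ts < b
    have htsltb : ts < b := by
      rcases eq_or_lt_of_le htsb with hEq | h
      · exfalso
        obtain ⟨e, heE⟩ := hEne
        have h1 : ts ≤ e := csInf_le hbdd heE
        have h2 : e = ts := le_antisymm (hEq ▸ heE.1.2) h1
        rw [h2] at heE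
        exact absurd hφts (ne_of_lt heE.2)
      · exact h
    have hxts : u (l * ts) = u ts := by simp only [hφdef] at hφts; linarith
    have hx₀mem : u ts ∈ Set.Ici (0:ℝ) := humem ts hts
    obtain ⟨K, s, hsmem, hK⟩ := hflip (u ts) hx₀mem
    obtain ⟨ε, hε, hball⟩ := Metric.mem_nhdsWithin_iff.mp hsmem
    -- continuity : find δ₁
    have hb1 : {σ | u σ ∈ Metric.ball (u ts) ε} ∈ 𝓝[Icc (0:ℝ) b] ts :=
      (hcu ts hts) (Metric.ball_mem_nhds _ hε)
    have hb2 : {σ | u (l * σ) ∈ Metric.ball (u ts) ε} ∈ 𝓝[Icc (0:ℝ) b] ts := by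
      have h := (hcul ts hts) (Metric.ball_mem_nhds (u (l * ts)) hε)
      rwa [hxts] at h
    obtain ⟨δ₁, hδ₁, hsub1⟩ := Metric.mem_nhdsWithin_iff.mp (inter_mem hb1 hb2)
    set K' : ℝ := (K : ℝ) + 1 with hK'def
    have hK'0 : 0 < K' := by positivity
    set δ₂ : ℝ := (γ / (2 * c * K')) ^ (γ⁻¹) with hδ₂def
    have hδ₂ : 0 < δ₂ := Real.rpow_pos_of_pos (by positivity) _
    set δ : ℝ := min (δ₁ / 2) (min (b - ts) δ₂) with hδdef
    have hδ0 : 0 < δ := lt_min (by linarith) (lt_min (by linarith) hδ₂)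
    have hδδ₁ : δ < δ₁ := lt_of_le_of_lt (min_le_left _ _) (by linarith)
    have hδb : ts + δ ≤ b := by
      have := le_trans (min_le_right (δ₁ / 2) _) (min_le_left (b - ts) δ₂)
      linarith
    have hδ₂' : δ ≤ δ₂ := le_trans (min_le_right _ _) (min_le_right _ _)
    have hδpow : δ ^ γ ≤ γ / (2 * c * K') := by
      calc δ ^ γ ≤ δ₂ ^ γ := Real.rpow_le_rpow hδ0.le hδ₂' hγ0.le
      _ = γ / (2 * c * K') := Real.rpow_inv_rpow (by positivity) hγ0.ne'
    have hJsub : Icc ts (ts + δ) ⊆ Icc (0:ℝ) b := fun σ hσ =>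
      ⟨le_trans hts0 hσ.1, le_trans hσ.2 hδb⟩
    obtain ⟨σ₀, hσ₀J, hminσ⟩ := isCompact_Icc.exists_isMinOn
      (nonempty_Icc.mpr (by linarith)) (hφc.mono hJsub)
    set M : ℝ := -φ σ₀ with hMdef
    obtain ⟨e, heE, helt⟩ := exists_lt_of_csInf_lt hEne
      (show sInf E < ts + δ by rw [← htsdef]; linarith)
    have hets : ts ≤ e := csInf_le hbdd heE
    have heJ : e ∈ Icc ts (ts + δ) := ⟨hets, helt.le⟩
    have hM0 : 0 < M := by
      have h1 := hminσ heJ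
      have h2 := heE.2
      simp only [hMdef]
      dsimp at h1 ⊢
      linarith
    -- membership in s for σ ∈ J
    have hmemball : ∀ σ ∈ Icc ts (ts + δ), u σ ∈ s ∧ u (l * σ) ∈ s := by
      intro σ hσ
      have hσI : σ ∈ Icc (0:ℝ) b := hJsub hσ
      have hσb : σ ∈ Metric.ball ts δ₁ := by
        rw [Metric.mem_ball, Real.dist_eq, abs_sub_lt_iff]
        constructor <;> [linarith [hσ.2]; linarith [hσ.1]]
      have h := hsub1 ⟨hσb, hσI⟩
      exact ⟨hball ⟨h.1, humem σ hσI⟩, hball ⟨h.2, humem _ (hlmem σ hσI)⟩⟩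
    have htsσ₀ : ts ≤ σ₀ := hσ₀J.1
    have hσ₀0 : 0 ≤ σ₀ := (hJsub hσ₀J).1
    have hσ₀b : σ₀ ≤ b := (hJsub hσ₀J).2
    -- pointwise bound for g on [ts, σ₀]
    have hglb : ∀ σ ∈ Icc ts σ₀, -(K' * M) ≤ g σ := by
      intro σ hσ
      have hσJ : σ ∈ Icc ts (ts + δ) := ⟨hσ.1, le_trans hσ.2 hσ₀J.2⟩
      have hσI : σ ∈ Icc (0:ℝ) b := hJsub hσJ
      obtain ⟨hs1, hs2⟩ := hmemball σ hσJ
      have hfl : 0 ≤ f (u (l * σ)) := hfpos _ (humem _ (hlmem σ hσI))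
      have hK'M : (0:ℝ) ≤ K' * M := by positivity
      rcases le_or_gt 0 (φ σ) with hφσ | hφσ
      · have h := hgpos_lt σ hσI.1 hσI.2 hφσ
        linarith
      · have hd : dist (f (u σ)) (f (u (l * σ))) ≤ K * dist (u σ) (u (l * σ)) :=
          hK.dist_le_mul _ hs1 _ hs2
        rw [Real.dist_eq, Real.dist_eq] at hd
        have hφσ' : u σ - u (l * σ) < 0 := hφσ
        have h1 : |u σ - u (l * σ)| = -(φ σ) := abs_of_neg hφσ'
        have hMb : -(φ σ) ≤ M := by
          have h := hminσ hσJ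
          simp only [hMdef]
          dsimp at h ⊢
          linarith
        have hKn : (0:ℝ) ≤ K := K.2
        have hKK' : (K:ℝ) ≤ K' := by rw [hK'def]; linarith
        have h2 : -(K' * M) ≤ f (u σ) - f (u (l * σ)) := by
          have h3 := neg_abs_le (f (u σ) - f (u (l * σ)))
          rw [h1] at hd
          have h4 : (K:ℝ) * (-(φ σ)) ≤ K * M := mul_le_mul_of_nonneg_left hMb hKn
          have h5 : (K:ℝ) * M ≤ K' * M := mul_le_mul_of_nonneg_right hKK' hM0.le
          linarith
        have h6 : l ^ γ * f (u (l * σ)) ≤ f (u (l * σ)) :=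
          mul_le_of_le_one_left hfl hlγ1
        simp only [hgdef]
        linarith
    -- integrability pieces
    have hint1 : IntervalIntegrable (fun σ => (σ₀ - σ) ^ (γ - 1) * g σ) volume 0 ts :=
      (kernel_intble hγ0 σ₀ 0 ts).mul_continuousOn
        (hgc.mono (by rw [uIcc_of_le hts0]; exact Icc_subset_Icc le_rfl htsb))
    have hint2 : IntervalIntegrable (fun σ => (σ₀ - σ) ^ (γ - 1) * g σ) volume ts σ₀ :=
      (kernel_intble hγ0 σ₀ ts σ₀).mul_continuousOn
        (hgc.mono (by rw [uIcc_of_le htsσ₀]; exact fun x hx => ⟨le_trans hts0 hx.1, le_trans hx.2 hσ₀b⟩))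
    have hidσ₀ := hid σ₀ (hJsub hσ₀J)
    have hsplit := intervalIntegral.integral_add_adjacent_intervals hint1 hint2
    have hpart1 : 0 ≤ ∫ σ in (0:ℝ)..ts, (σ₀ - σ) ^ (γ - 1) * g σ := by
      apply intervalIntegral.integral_nonneg hts0
      intro σ hσ
      have hφσ : 0 ≤ φ σ := by
        rcases eq_or_lt_of_le hσ.2 with hEq | hLt
        · rw [hEq, hφts]
        · exact hpos σ hσ.1 (le_trans hσ.2 htsb) hLt
      exact mul_nonneg (Real.rpow_nonneg (by linarith [hσ.2, htsσ₀]) _)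
        (hgpos_lt σ hσ.1 (le_trans hσ.2 htsb) hφσ)
    have hconst_int : IntervalIntegrable
        (fun σ => (σ₀ - σ) ^ (γ - 1) * (-(K' * M))) volume ts σ₀ :=
      (kernel_intble hγ0 σ₀ ts σ₀).mul_const _
    have hcalc : (∫ σ in ts..σ₀, (σ₀ - σ) ^ (γ - 1) * (-(K' * M)))
        = (-(K' * M)) * ((σ₀ - ts) ^ γ / γ) := by
      rw [intervalIntegral.integral_mul_const, kernel_integral hγ0, sub_self,
        Real.zero_rpow hγ0.ne']
      ring
    have hpart2 : (-(K' * M)) * ((σ₀ - ts) ^ γ / γ)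
        ≤ ∫ σ in ts..σ₀, (σ₀ - σ) ^ (γ - 1) * g σ := by
      rw [← hcalc]
      apply intervalIntegral.integral_mono_on htsσ₀ hconst_int hint2
      intro σ hσ
      exact mul_le_mul_of_nonneg_left (hglb σ hσ)
        (Real.rpow_nonneg (by linarith [hσ.2]) _)
    have hlow : c * ((-(K' * M)) * ((σ₀ - ts) ^ γ / γ)) ≤ φ σ₀ := by
      rw [hidσ₀, ← hsplit]
      have h := add_le_add hpart1 hpart2
      rw [zero_add] at h
      calc c * ((-(K' * M)) * ((σ₀ - ts) ^ γ / γ))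
          ≤ c * ((∫ σ in (0:ℝ)..ts, (σ₀ - σ) ^ (γ - 1) * g σ)
            + ∫ σ in ts..σ₀, (σ₀ - σ) ^ (γ - 1) * g σ) :=
        mul_le_mul_of_nonneg_left h hcpos.le
      _ = _ := rfl
    have hppow : (σ₀ - ts) ^ γ ≤ γ / (2 * c * K') := by
      calc (σ₀ - ts) ^ γ ≤ δ ^ γ :=
        Real.rpow_le_rpow (by linarith) (by linarith [hσ₀J.2]) hγ0.le
      _ ≤ γ / (2 * c * K') := hδpow
    have h2pow : (0:ℝ) ≤ (σ₀ - ts) ^ γ := Real.rpow_nonneg (by linarith) _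
    have hfeq : c * K' * M / γ * (γ / (2 * c * K')) = M / 2 := by
      field_simp
    have hkey := mul_le_mul_of_nonneg_left hppow
      (show (0:ℝ) ≤ c * K' * M / γ by positivity)
    rw [hfeq] at hkey
    have hφσ₀M : φ σ₀ = -M := by simp only [hMdef]; ring
    rw [hφσ₀M] at hlow
    have hexp : c * ((-(K' * M)) * ((σ₀ - ts) ^ γ / γ))
        = -(c * K' * M / γ * ((σ₀ - ts) ^ γ)) := by ring
    rw [hexp] at hlow
    have hMA : M ≤ c * K' * M / γ * (σ₀ - ts) ^ γ := by linarith
    exact absurd (le_trans hMA hkey) (not_le.mpr (half_lt_self hM0))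
  have hbmem : b ∈ Icc (0:ℝ) b := ⟨hb0.le, le_rfl⟩
  have := claim b hbmem
  simp only [hφdef, hlb] at this
  linarith

-- Bernoulli-type inequality for concave power
lemma bern {γ : ℝ} (hγ0 : 0 < γ) (hγ1 : γ < 1) {x : ℝ} (hx : 1 ≤ x) :
    γ * x ^ (γ - 1) ≤ x ^ γ - (x - 1) ^ γ := by
  rcases eq_or_lt_of_le hx with hx1 | hx1
  · rw [← hx1]
    simp [Real.one_rpow, Real.zero_rpow hγ0.ne']
    linarith [Real.one_rpow γ]
  · have hx0 : 0 < x - 1 := by linarith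
    have hint : IntervalIntegrable (fun s : ℝ => s ^ (γ - 1)) volume (x - 1) x :=
      intervalIntegrable_rpow' (by linarith)
    have hval : (∫ s in (x-1)..x, s ^ (γ - 1)) = (x ^ γ - (x - 1) ^ γ) / γ := by
      rw [integral_rpow (Or.inl (by linarith))]
      ring_nf
    have hmono : x ^ (γ - 1) ≤ (x ^ γ - (x - 1) ^ γ) / γ := by
      rw [← hval]
      have h1 : (∫ s in (x-1)..x, (x:ℝ) ^ (γ - 1)) ≤ ∫ s in (x-1)..x, s ^ (γ - 1) := by
        apply intervalIntegral.integral_mono_on (by linarith) (by simp) hint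
        intro s hs
        exact Real.rpow_le_rpow_of_nonpos (by linarith [hs.1]) hs.2 (by linarith)
      rw [intervalIntegral.integral_const, smul_eq_mul] at h1
      have : (x - (x - 1)) = 1 := by ring
      rw [this, one_mul] at h1
      exact h1
    calc γ * x ^ (γ - 1) ≤ γ * ((x ^ γ - (x - 1) ^ γ) / γ) :=
          mul_le_mul_of_nonneg_left hmono hγ0.le
    _ = x ^ γ - (x - 1) ^ γ := by field_simp

/-- The maximal existence time `T_b`: the supremum of all `T` such that a solution
exists on `[0, T)`. -/
noncomputable def maxTime (γ : ℝ) (f : ℝ → ℝ) (D : Set ℝ) (u₀ : ℝ) : ℝ≥0∞ :=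
  sSup {T : ℝ≥0∞ | ∃ u : ℝ → ℝ, IsSolUpTo γ f D u₀ u T}


/-- absolute stability of the explicit schemes for the integral
equation: the numerical solution is non-decreasing and below the true solution. -/
theorem stmt19 (γ k u₀ : ℝ) (f : ℝ → ℝ) (u : ℝ → ℝ) (useq : ℕ → ℝ)
    (hγ : γ ∈ Set.Ioo (0:ℝ) 1) (hk : 0 < k)
    (hfpos : ∀ x ∈ Set.Ici (0:ℝ), 0 ≤ f x)
    (hfmono : MonotoneOn f (Set.Ici 0))
    (hflip : ∀ x ∈ Set.Ici (0:ℝ), ∃ K : NNReal, ∃ s ∈ 𝓝[Set.Ici (0:ℝ)] x, LipschitzOnWith K f s)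
    (hu₀ : 0 < u₀)
    (hu : IsSolUpTo γ f (Set.Ici 0) u₀ u (maxTime γ f (Set.Ici 0) u₀))
    (hscheme :
      (∀ n : ℕ, useq n = u₀ + k ^ γ / Real.Gamma (1 + γ) *
        ∑ m ∈ Finset.range n, f (useq m) * (((n : ℝ) - m) ^ γ - ((n : ℝ) - m - 1) ^ γ)) ∨
      (∀ n : ℕ, useq n = u₀ + k ^ γ / Real.Gamma γ *
        ∑ m ∈ Finset.range n, f (useq m) * ((n : ℝ) - m) ^ (γ - 1))) :
    ∀ n : ℕ, 1 ≤ n → ENNReal.ofReal (n * k) < maxTime γ f (Set.Ici 0) u₀ →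
      useq (n - 1) ≤ useq n ∧ useq n ≤ u (n * k) := by
  obtain ⟨hγ0, hγ1⟩ := hγ
  set T := maxTime γ f (Set.Ici 0) u₀ with hTdef
  have hGpos : 0 < Real.Gamma γ := Real.Gamma_pos_of_pos hγ0
  have hG1 : Real.Gamma (1 + γ) = γ * Real.Gamma γ := by
    rw [add_comm]; exact Real.Gamma_add_one hγ0.ne'
  have hG1pos : 0 < Real.Gamma (1 + γ) := by rw [hG1]; positivity
  set c : ℝ := 1 / Real.Gamma γ with hcdef
  have hcpos : 0 < c := by positivity
  -- unified representation of the scheme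
  obtain ⟨ω, hωrep, hωpos, hωle⟩ :
      ∃ ω : ℝ → ℝ,
        (∀ n : ℕ, useq n = u₀ + ∑ m ∈ Finset.range n, f (useq m) * ω ((n:ℝ) - m)) ∧
        (∀ x : ℝ, 1 ≤ x → 0 ≤ ω x) ∧
        (∀ n m : ℕ, m < n →
          ω ((n:ℝ) - m) ≤ c * ∫ s in ((m:ℝ)*k)..(((m:ℝ)+1)*k), ((n:ℝ)*k - s) ^ (γ - 1)) := by
    have hker : ∀ n m : ℕ, m < n →
        (∫ s in ((m:ℝ)*k)..(((m:ℝ)+1)*k), ((n:ℝ)*k - s) ^ (γ - 1))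
        = k ^ γ * ((((n:ℝ) - m) ^ γ - ((n:ℝ) - m - 1) ^ γ)) / γ := by
      intro n m hmn
      have hm1 : (0:ℝ) ≤ (n:ℝ) - m - 1 := by
        have : (m:ℝ) + 1 ≤ n := by exact_mod_cast hmn
        linarith
      rw [kernel_integral hγ0]
      have e1 : (n:ℝ)*k - (m:ℝ)*k = k * ((n:ℝ) - m) := by ring
      have e2 : (n:ℝ)*k - ((m:ℝ)+1)*k = k * ((n:ℝ) - m - 1) := by ring
      rw [e1, e2, Real.mul_rpow hk.le (by linarith), Real.mul_rpow hk.le hm1]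
      ring
    rcases hscheme with hs | hs
    · refine ⟨fun x => k ^ γ / Real.Gamma (1 + γ) * (x ^ γ - (x - 1) ^ γ), ?_, ?_, ?_⟩
      · intro n
        rw [hs n, Finset.mul_sum]
        congr 1
        apply Finset.sum_congr rfl
        intro m _
        ring
      · intro x hx
        have h1 : (x - 1) ^ γ ≤ x ^ γ :=
          Real.rpow_le_rpow (by linarith) (by linarith) hγ0.le
        have h2 : 0 ≤ k ^ γ / Real.Gamma (1 + γ) := by positivity
        nlinarith
      · intro n m hmn
        rw [hker n m hmn, hG1, hcdef]
        apply le_of_eq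
        field_simp
    · refine ⟨fun x => k ^ γ / Real.Gamma γ * x ^ (γ - 1), ?_, ?_, ?_⟩
      · intro n
        rw [hs n, Finset.mul_sum]
        congr 1
        apply Finset.sum_congr rfl
        intro m _
        ring
      · intro x hx
        have : 0 ≤ x ^ (γ - 1) := Real.rpow_nonneg (by linarith) _
        positivity
      · intro n m hmn
        rw [hker n m hmn, hcdef]
        have hx : (1:ℝ) ≤ (n:ℝ) - m := by
          have : (m:ℝ) + 1 ≤ n := by exact_mod_cast hmn
          linarith
        have hkγ : 0 ≤ k ^ γ := Real.rpow_nonneg hk.le _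
        have hb2 : ((n:ℝ) - m) ^ (γ-1) ≤ ((((n:ℝ)-m))^γ - (((n:ℝ)-m)-1)^γ)/γ := by
          rw [le_div_iff₀ hγ0]
          nlinarith [bern hγ0 hγ1 hx]
        have h4 := mul_le_mul_of_nonneg_left (mul_le_mul_of_nonneg_left hb2 hkγ)
          (le_of_lt (show (0:ℝ) < 1/Real.Gamma γ by positivity))
        calc (fun x => k ^ γ / Real.Gamma γ * x ^ (γ - 1)) ((n:ℝ) - (m:ℝ))
            = 1/Real.Gamma γ * (k ^ γ * (((n:ℝ)-m) ^ (γ-1))) := by ring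
          _ ≤ 1/Real.Gamma γ * (k ^ γ * (((((n:ℝ)-m))^γ - (((n:ℝ)-m)-1)^γ)/γ)) := h4
          _ = 1/Real.Gamma γ * (k ^ γ * ((((n:ℝ) - m)) ^ γ - (((n:ℝ) - m) - 1) ^ γ) / γ) := by
              ring
  
  have h0seq : useq 0 = u₀ := by simpa using hωrep 0
  -- lower bound
  have hge : ∀ n : ℕ, u₀ ≤ useq n := by
    intro n
    induction n using Nat.strong_induction_on with
    | _ n ih =>
      rw [hωrep n]
      have hs : 0 ≤ ∑ m ∈ Finset.range n, f (useq m) * ω ((n:ℝ) - m) := by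
        apply Finset.sum_nonneg
        intro m hm
        have hmn := Finset.mem_range.mp hm
        have h1 : (0:ℝ) ≤ useq m := le_trans hu₀.le (ih m hmn)
        have h2 : (1:ℝ) ≤ (n:ℝ) - m := by
          have : (m:ℝ) + 1 ≤ n := by exact_mod_cast hmn
          linarith
        exact mul_nonneg (hfpos _ h1) (hωpos _ h2)
      linarith
  -- monotonicity of the sequence
  have hmonoseq : ∀ n : ℕ, useq n ≤ useq (n + 1) := by
    intro n
    induction n using Nat.strong_induction_on with
    | _ n ih =>
      rw [hωrep n, hωrep (n + 1)]
      have hS : ∑ m ∈ Finset.range (n+1), f (useq m) * ω (((n+1:ℕ):ℝ) - (m:ℝ))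
          = (∑ i ∈ Finset.range n, f (useq (i+1)) * ω ((n:ℝ) - i))
            + f (useq 0) * ω ((n:ℝ) + 1) := by
        rw [Finset.sum_range_succ']
        congr 1
        · apply Finset.sum_congr rfl
          intro i _
          congr 2
          push_cast
          ring
        · congr 2
          push_cast
          ring
      rw [hS]
      have hterm : ∀ i ∈ Finset.range n,
          f (useq i) * ω ((n:ℝ) - i) ≤ f (useq (i+1)) * ω ((n:ℝ) - i) := by
        intro i hi
        have hi' := Finset.mem_range.mp hi
        have h2 : (1:ℝ) ≤ (n:ℝ) - i := by
          have : (i:ℝ) + 1 ≤ n := by exact_mod_cast hi'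
          linarith
        apply mul_le_mul_of_nonneg_right _ (hωpos _ h2)
        exact hfmono (le_trans hu₀.le (hge i)) (le_trans hu₀.le (hge (i+1))) (ih i hi')
      have h0' : 0 ≤ f (useq 0) * ω ((n:ℝ) + 1) :=
        mul_nonneg (hfpos _ (le_trans hu₀.le (hge 0)))
          (hωpos _ (by linarith [Nat.cast_nonneg (α:=ℝ) n]))
      have hsum := Finset.sum_le_sum hterm
      linarith
  -- comparison with the true solution
  have hcmp : ∀ n : ℕ, ENNReal.ofReal ((n:ℝ) * k) < T → useq n ≤ u ((n:ℝ) * k) := by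
    intro n
    induction n using Nat.strong_induction_on with
    | _ n ih =>
      intro hnT
      rcases Nat.eq_zero_or_pos n with rfl | hn0
      · simp only [Nat.cast_zero, zero_mul]
        rw [hu.1, h0seq]
      · have hnk0 : (0:ℝ) ≤ (n:ℝ) * k := by positivity
        have hD : ∀ t : ℝ, 0 ≤ t → t ≤ (n:ℝ)*k → ENNReal.ofReal t < T := fun t _ h =>
          lt_of_le_of_lt (ENNReal.ofReal_le_ofReal h) hnT
        have hfu : ContinuousOn (fun s => f (u s)) (Icc 0 ((n:ℝ)*k)) :=
          (lip_cont hflip).comp (hu.2.1.mono (fun t ht => ⟨ht.1, hD t ht.1 ht.2⟩))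
            (fun t ht => hu.2.2.1 t ht.1 (hD t ht.1 ht.2))
        set a : ℕ → ℝ := fun i => (i:ℝ) * k with hadef
        have ham : ∀ m : ℕ, a m ≤ a (m+1) := by
          intro m
          simp only [hadef]
          push_cast
          nlinarith [hk]
        have hsubI : ∀ m : ℕ, m < n → Set.uIcc (a m) (a (m+1)) ⊆ Icc (0:ℝ) ((n:ℝ)*k) := by
          intro m hmn
          rw [uIcc_of_le (ham m)]
          apply Icc_subset_Icc
          · simp only [hadef]; positivity
          · simp only [hadef]
            have h1 : ((m:ℝ)+1) ≤ (n:ℝ) := by exact_mod_cast hmn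
            push_cast
            nlinarith [hk]
        have hintm : ∀ m : ℕ, m < n → IntervalIntegrable
            (fun s => ((n:ℝ)*k - s)^(γ-1) * f (u s)) volume (a m) (a (m+1)) :=
          fun m hmn => (kernel_intble hγ0 _ _ _).mul_continuousOn (hfu.mono (hsubI m hmn))
        have hsum := intervalIntegral.sum_integral_adjacent_intervals (μ := volume)
          (a := a) (f := fun s => ((n:ℝ)*k - s)^(γ-1) * f (u s)) hintm
        have ha0 : a 0 = 0 := by simp [hadef]
        rw [ha0] at hsum
        have hterm : ∀ m ∈ Finset.range n, f (useq m) * ω ((n:ℝ) - m)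
            ≤ c * ∫ s in a m..a (m+1), ((n:ℝ)*k - s)^(γ-1) * f (u s) := by
          intro m hm
          have hmn := Finset.mem_range.mp hm
          have hm1n : ((m:ℝ)+1) ≤ (n:ℝ) := by exact_mod_cast hmn
          have hfm0 : 0 ≤ f (useq m) := hfpos _ (le_trans hu₀.le (hge m))
          have hmk0 : (0:ℝ) ≤ (m:ℝ)*k := by positivity
          have hmkn : (m:ℝ)*k ≤ (n:ℝ)*k := by nlinarith [hk]
          have hIH : useq m ≤ u ((m:ℝ)*k) := ih m hmn (hD _ hmk0 hmkn)
          have ham1 : a (m+1) = ((m:ℝ)+1)*k := by simp only [hadef]; push_cast; ring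
          have hamm : a m = (m:ℝ)*k := rfl
          have hknl : IntervalIntegrable
              (fun s => ((n:ℝ)*k - s)^(γ-1) * f (useq m)) volume (a m) (a (m+1)) :=
            (kernel_intble hγ0 _ _ _).mul_const _
          have hpt : ∀ s ∈ Icc (a m) (a (m+1)),
              ((n:ℝ)*k - s)^(γ-1) * f (useq m) ≤ ((n:ℝ)*k - s)^(γ-1) * f (u s) := by
            intro s hs
            have hs0 : 0 ≤ s := le_trans (by rw [hamm]; positivity) hs.1
            have hsnk : s ≤ (n:ℝ)*k := by
              refine le_trans hs.2 ?_
              rw [ham1]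
              nlinarith [hk]
            have husm : u ((m:ℝ)*k) ≤ u s :=
              sol_mono hγ0 hγ1 hfpos hfmono hflip hu₀ hu hmk0 hs.1 (hD s hs0 hsnk)
            have hfus : f (useq m) ≤ f (u s) :=
              hfmono (le_trans hu₀.le (hge m))
                (hu.2.2.1 s hs0 (hD s hs0 hsnk)) (le_trans hIH husm)
            exact mul_le_mul_of_nonneg_left hfus (Real.rpow_nonneg (by linarith) _)
          have hmono2 := intervalIntegral.integral_mono_on (ham m) hknl (hintm m hmn) hpt
          rw [intervalIntegral.integral_mul_const] at hmono2
          have hω := hωle n m hmn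
          rw [← hamm, ← ham1] at hω
          calc f (useq m) * ω ((n:ℝ) - m)
              ≤ f (useq m) * (c * ∫ s in a m..a (m+1), ((n:ℝ)*k - s)^(γ-1)) :=
                mul_le_mul_of_nonneg_left hω hfm0
            _ = c * ((∫ s in a m..a (m+1), ((n:ℝ)*k - s)^(γ-1)) * f (useq m)) := by ring
            _ ≤ c * ∫ s in a m..a (m+1), ((n:ℝ)*k - s)^(γ-1) * f (u s) :=
                mul_le_mul_of_nonneg_left hmono2 hcpos.le
        have hsum2 := Finset.sum_le_sum hterm
        rw [← Finset.mul_sum, hsum] at hsum2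
        have heqn := hu.2.2.2 ((n:ℝ)*k) hnk0 hnT
        rw [hωrep n, heqn, ← hcdef]
        have han : a n = (n:ℝ)*k := rfl
        rw [han] at hsum2
        linarith
  -- conclusion
  intro n hn1 hnT
  constructor
  · have := hmonoseq (n - 1)
    rwa [Nat.sub_add_cancel hn1] at this
  · exact hcmp n hnT
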